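/- Let g₁, g₂ ∈ L²(S¹) be the unique mean-zero solutions of L g_j (v) = v_j for j = 1, 2, where v_j denotes the j-th Cartesian component of v ∈ S¹, and define the diffusion matrix D_{ij} := (1/(2π)) ∫_{S¹} v_i (−g_j(v)) dv. Then the off-diagonal entries vanish, D_{12} = D_{21} = 0, the diagonal entries are equal, D_{11} = D_{22} = D with D = 3/(16λ), and in particular the diffusion coefficient D = (1/(4π)) ∫_{S¹} v · (−L)^{−1} v dv is strictly positive. -/

import Mathlib

open MeasureTheory Real

noncomputable section

/-- The unit circle, modelled as `ℝ / 2πℤ`, carrying the arclength measure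
(total mass `2π`). -/
abbrev S1 : Type := AddCircle (2 * π)

instance : Fact ((0:ℝ) < 2 * π) := ⟨by positivity⟩

/-- The gain operator of the two-dimensional hard-disk linear Boltzmann equation
(acting on real-valued functions):
`(K f)(v(θ)) = (1/2) ∫_{−1}^{1} f(v(θ + π − 2 arcsin δ)) dδ`. -/
def KopR (f : S1 → ℝ) (θ : S1) : ℝ :=
  (1 / 2 : ℝ) * ∫ δ in (-1:ℝ)..1, f (θ + ((π - 2 * arcsin δ : ℝ) : S1))

/-- First Cartesian component `v₁` of `v(θ) = (cos θ, sin θ)` on `S¹`. -/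
def ccos : S1 → ℝ := Real.cos_periodic.lift

/-- Second Cartesian component `v₂` of `v(θ) = (cos θ, sin θ)` on `S¹`. -/
def csin : S1 → ℝ := Real.sin_periodic.lift


lemma ccos_coe (x : ℝ) : ccos (x : S1) = Real.cos x := rfl
lemma csin_coe (x : ℝ) : csin (x : S1) = Real.sin x := rfl

lemma ccos_add (θ : S1) (x : ℝ) :
    ccos (θ + (x : S1)) = ccos θ * Real.cos x - csin θ * Real.sin x := by
  induction θ using QuotientAddGroup.induction_on with
  | H y =>
    rw [show ((y : S1) + (x : S1)) = ((y + x : ℝ) : S1) by rw [AddCircle.coe_add]]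
    simp only [ccos_coe, csin_coe]
    exact Real.cos_add y x

lemma csin_add (θ : S1) (x : ℝ) :
    csin (θ + (x : S1)) = csin θ * Real.cos x + ccos θ * Real.sin x := by
  induction θ using QuotientAddGroup.induction_on with
  | H y =>
    rw [show ((y : S1) + (x : S1)) = ((y + x : ℝ) : S1) by rw [AddCircle.coe_add]]
    simp only [ccos_coe, csin_coe]
    rw [Real.sin_add]

lemma continuous_ccos : Continuous ccos :=
  Real.continuous_cos.quotient_liftOn' _

lemma continuous_csin : Continuous csin :=
  Real.continuous_sin.quotient_liftOn' _

lemma abs_ccos_le (θ : S1) : |ccos θ| ≤ 1 :=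
  QuotientAddGroup.induction_on θ fun x => by simpa [ccos_coe] using Real.abs_cos_le_one x

lemma abs_csin_le (θ : S1) : |csin θ| ≤ 1 :=
  QuotientAddGroup.induction_on θ fun x => by simpa [csin_coe] using Real.abs_sin_le_one x

-- delta integrals
lemma int_cos_shift : ∫ δ in (-1:ℝ)..1, Real.cos (π - 2 * arcsin δ) = -(2/3) := by
  have h : ∀ δ ∈ Set.uIcc (-1:ℝ) 1, Real.cos (π - 2 * arcsin δ) = 2 * δ^2 - 1 := by
    intro δ hδ
    rw [Set.uIcc_of_le (by norm_num)] at hδ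
    rw [Real.cos_pi_sub, Real.cos_two_mul, Real.cos_arcsin,
      Real.sq_sqrt (by nlinarith [hδ.1, hδ.2] : (0:ℝ) ≤ 1 - δ^2)]
    ring
  rw [intervalIntegral.integral_congr h]
  rw [intervalIntegral.integral_sub (by apply IntervalIntegrable.const_mul; exact intervalIntegral.intervalIntegrable_pow 2) intervalIntegrable_const,
    intervalIntegral.integral_const_mul, integral_pow]
  norm_num

lemma int_sin_shift : ∫ δ in (-1:ℝ)..1, Real.sin (π - 2 * arcsin δ) = 0 := by
  have h : (∫ δ in (-1:ℝ)..1, Real.sin (π - 2 * arcsin δ))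
      = ∫ δ in (-1:ℝ)..1, Real.sin (2 * arcsin δ) := by
    congr 1; ext δ; rw [Real.sin_pi_sub]
  have h2 : (∫ δ in (-1:ℝ)..1, Real.sin (2 * arcsin δ))
      = ∫ δ in (-1:ℝ)..1, Real.sin (2 * arcsin (-δ)) := by
    rw [intervalIntegral.integral_comp_neg (fun δ => Real.sin (2 * arcsin δ))]
    norm_num
  simp only [Real.arcsin_neg, mul_neg, Real.sin_neg] at h2
  rw [intervalIntegral.integral_neg] at h2
  rw [h]; linarith [h2]

def nu : Measure ℝ := volume.restrict (Set.Ioc (-1:ℝ) 1)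

instance : IsFiniteMeasure nu := by
  unfold nu
  constructor
  rw [Measure.restrict_apply_univ]
  simp [Real.volume_Ioc]

def shiftMap : ℝ × S1 → S1 := fun p => p.2 + ((π - 2 * arcsin p.1 : ℝ) : S1)

lemma continuous_shiftMap : Continuous shiftMap := by
  apply Continuous.add continuous_snd
  exact (AddCircle.continuous_mk' _).comp
    ((continuous_const.sub (continuous_const.mul Real.continuous_arcsin)).comp continuous_fst)

lemma ae_comp_shift {g g' : S1 → ℝ} (h : g =ᵐ[(volume : Measure S1)] g') :
    (fun p : ℝ × S1 => g (shiftMap p)) =ᵐ[nu.prod (volume : Measure S1)]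
    (fun p => g' (shiftMap p)) := by
  rw [Filter.EventuallyEq, ae_iff] at h ⊢
  obtain ⟨N, hNsub, hNmeas, hN0⟩ := exists_measurable_superset_of_null h
  have hS : (nu.prod (volume : Measure S1)) (shiftMap ⁻¹' N) = 0 := by
    rw [Measure.measure_prod_null (continuous_shiftMap.measurable hNmeas)]
    refine Filter.Eventually.of_forall fun δ => ?_
    simp only [Pi.zero_apply]
    show (volume : Measure S1) (Prod.mk δ ⁻¹' (shiftMap ⁻¹' N)) = 0
    have : (Prod.mk δ ⁻¹' (shiftMap ⁻¹' N))
        = (fun θ : S1 => θ + ((π - 2 * arcsin δ : ℝ) : S1)) ⁻¹' N := rfl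
    rw [this, measure_preimage_add_right]
    exact hN0
  refine measure_mono_null (fun p hp => ?_) hS
  exact hNsub hp


lemma integrable_G {g : S1 → ℝ} (hg : Integrable g (volume : Measure S1))
    {f : S1 → ℝ} (hfc : Continuous f) (hfb : ∀ θ, |f θ| ≤ 1) :
    Integrable (fun p : ℝ × S1 => f p.2 * g (shiftMap p)) (nu.prod volume) := by
  obtain ⟨g₀, hg₀meas, hgg₀⟩ : ∃ g₀, StronglyMeasurable g₀ ∧ g =ᵐ[(volume : Measure S1)] g₀ :=
    ⟨hg.1.mk g, hg.1.stronglyMeasurable_mk, hg.1.ae_eq_mk⟩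
  have hG₀ : StronglyMeasurable (fun p : ℝ × S1 => f p.2 * g₀ (shiftMap p)) :=
    ((hfc.comp continuous_snd).stronglyMeasurable).mul
      (hg₀meas.comp_measurable continuous_shiftMap.measurable)
  have haesm : AEStronglyMeasurable (fun p : ℝ × S1 => f p.2 * g (shiftMap p))
      (nu.prod volume) := by
    refine hG₀.aestronglyMeasurable.congr ?_
    filter_upwards [ae_comp_shift hgg₀] with p hp
    rw [hp]
  rw [integrable_prod_iff haesm]
  constructor
  · refine Filter.Eventually.of_forall fun δ => ?_
    have hcomp : Integrable (fun θ : S1 => g (θ + ((π - 2 * arcsin δ : ℝ) : S1))) volume :=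
      hg.comp_add_right _
    exact hcomp.bdd_mul hfc.aestronglyMeasurable (c := 1) (Filter.Eventually.of_forall fun θ => by
      simpa [Real.norm_eq_abs] using hfb θ)
  · have hbd : ∀ δ : ℝ, (∫ θ : S1, ‖f θ * g (shiftMap (δ, θ))‖ ∂volume)
        ≤ ∫ θ : S1, ‖g θ‖ ∂volume := by
      intro δ
      have hcomp : Integrable (fun θ : S1 => g (θ + ((π - 2 * arcsin δ : ℝ) : S1))) volume :=
        hg.comp_add_right _
      have h1 : (∫ θ : S1, ‖f θ * g (shiftMap (δ, θ))‖ ∂volume)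
          ≤ ∫ θ : S1, ‖g (θ + ((π - 2 * arcsin δ : ℝ) : S1))‖ ∂volume := by
        refine integral_mono ?_ hcomp.norm ?_
        · exact (hcomp.bdd_mul hfc.aestronglyMeasurable (c := 1) (Filter.Eventually.of_forall fun θ => by
            simpa [Real.norm_eq_abs] using hfb θ)).norm
        · intro θ
          simp only [norm_mul]
          have : ‖f θ‖ ≤ 1 := by simpa [Real.norm_eq_abs] using hfb θ
          calc ‖f θ‖ * ‖g (shiftMap (δ, θ))‖ ≤ 1 * ‖g (shiftMap (δ, θ))‖ :=
                mul_le_mul_of_nonneg_right this (norm_nonneg _)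
            _ = ‖g (θ + ((π - 2 * arcsin δ : ℝ) : S1))‖ := by rw [one_mul]; rfl
      have h2 : (∫ θ : S1, ‖g (θ + ((π - 2 * arcsin δ : ℝ) : S1))‖ ∂volume)
          = ∫ θ : S1, ‖g θ‖ ∂volume :=
        integral_add_right_eq_self (fun θ : S1 => ‖g θ‖) _
      linarith
    refine Integrable.mono' (integrable_const (∫ θ : S1, ‖g θ‖ ∂volume))
      (haesm.norm.integral_prod_right') ?_
    refine Filter.Eventually.of_forall fun δ => ?_
    rw [Real.norm_eq_abs, abs_of_nonneg (integral_nonneg fun θ => norm_nonneg _)]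
    exact hbd δ

lemma pairing {g : S1 → ℝ} (hg : Integrable g (volume : Measure S1))
    {f f' : S1 → ℝ} (hfc : Continuous f) (hf'c : Continuous f')
    (hfb : ∀ θ, |f θ| ≤ 1) (hf'b : ∀ θ, |f' θ| ≤ 1)
    (hrot : ∀ (θ : S1) (x : ℝ), f (θ + (x : S1)) = f θ * Real.cos x - f' θ * Real.sin x) :
    (∫ θ, f θ * KopR g θ ∂(volume : Measure S1))
      = -(1/3) * ∫ θ, f θ * g θ ∂(volume : Measure S1) ∧
    Integrable (fun θ => f θ * KopR g θ) (volume : Measure S1) := by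
  set G : ℝ × S1 → ℝ := fun p => f p.2 * g (shiftMap p) with hGdef
  have hG : Integrable G (nu.prod volume) := integrable_G hg hfc hfb
  have hA : Integrable (fun θ => f θ * g θ) (volume : Measure S1) :=
    hg.bdd_mul hfc.aestronglyMeasurable (c := 1) (Filter.Eventually.of_forall fun θ => by simpa [Real.norm_eq_abs] using hfb θ)
  have hB : Integrable (fun θ => f' θ * g θ) (volume : Measure S1) :=
    hg.bdd_mul hf'c.aestronglyMeasurable (c := 1) (Filter.Eventually.of_forall fun θ => by simpa [Real.norm_eq_abs] using hf'b θ)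
  set A := ∫ θ, f θ * g θ ∂(volume : Measure S1) with hAdef
  set B := ∫ θ, f' θ * g θ ∂(volume : Measure S1) with hBdef
  -- pointwise identity
  have id1 : ∀ θ : S1, f θ * KopR g θ = (1/2) * ∫ δ, G (δ, θ) ∂nu := by
    intro θ
    unfold KopR
    rw [intervalIntegral.integral_of_le (by norm_num : (-1:ℝ) ≤ 1)]
    have : (∫ δ, G (δ, θ) ∂nu) = f θ * ∫ δ in Set.Ioc (-1:ℝ) 1, g (θ + ((π - 2 * arcsin δ : ℝ) : S1)) := by
      rw [← integral_const_mul]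
      rfl
    rw [this]; ring
  -- inner integral for a fixed shift s
  have hinner : ∀ s : ℝ, (∫ θ, f θ * g (θ + ((s:ℝ) : S1)) ∂(volume : Measure S1))
      = Real.cos s * A + Real.sin s * B := by
    intro s
    have hcoe : ∀ θ : S1, θ + ((s:ℝ):S1) + ((-s:ℝ):S1) = θ := by
      intro θ; rw [add_assoc, ← AddCircle.coe_add]; norm_num
    have key := integral_add_right_eq_self (μ := (volume : Measure S1))
        (fun θ : S1 => f (θ + ((-s : ℝ) : S1)) * g θ) ((s : ℝ) : S1)
    have e0 : (fun θ : S1 => f (θ + ((s:ℝ):S1) + ((-s:ℝ):S1)) * g (θ + ((s:ℝ):S1)))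
        = fun θ : S1 => f θ * g (θ + ((s:ℝ):S1)) := funext fun θ => by rw [hcoe]
    have e1 : (∫ θ : S1, f (θ + ((-s:ℝ):S1)) * g θ ∂(volume : Measure S1))
        = ∫ θ : S1, (Real.cos s * (f θ * g θ) + Real.sin s * (f' θ * g θ)) ∂(volume : Measure S1) := by
      congr 1; funext θ
      rw [show ((-s : ℝ) : S1) = ((-s : ℝ) : S1) from rfl, hrot θ (-s), Real.cos_neg, Real.sin_neg]
      ring
    calc (∫ θ, f θ * g (θ + ((s:ℝ):S1)) ∂(volume : Measure S1))
        = ∫ θ : S1, f (θ + ((s:ℝ):S1) + ((-s:ℝ):S1)) * g (θ + ((s:ℝ):S1)) ∂volume := by rw [e0]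
      _ = ∫ θ : S1, f (θ + ((-s:ℝ):S1)) * g θ ∂volume := key
      _ = ∫ θ : S1, (Real.cos s * (f θ * g θ) + Real.sin s * (f' θ * g θ)) ∂volume := e1
      _ = Real.cos s * A + Real.sin s * B := by
          rw [integral_add (hA.const_mul _) (hB.const_mul _), integral_const_mul,
            integral_const_mul]
  -- the outer integral
  have houter : (∫ δ, (∫ θ, G (δ, θ) ∂(volume : Measure S1)) ∂nu) = -(2/3) * A := by
    have e2 : (fun δ : ℝ => ∫ θ, G (δ, θ) ∂(volume : Measure S1))
        = fun δ : ℝ => Real.cos (π - 2 * arcsin δ) * A + Real.sin (π - 2 * arcsin δ) * B :=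
      funext fun δ => hinner (π - 2 * arcsin δ)
    rw [e2]
    have : (∫ δ, (Real.cos (π - 2 * arcsin δ) * A + Real.sin (π - 2 * arcsin δ) * B) ∂nu)
        = ∫ δ in (-1:ℝ)..1, (Real.cos (π - 2 * arcsin δ) * A + Real.sin (π - 2 * arcsin δ) * B) := by
      rw [intervalIntegral.integral_of_le (by norm_num : (-1:ℝ) ≤ 1)]
      rfl
    have c1 : Continuous fun δ : ℝ => Real.cos (π - 2 * arcsin δ) * A :=
      (Real.continuous_cos.comp (continuous_const.sub
        (continuous_const.mul Real.continuous_arcsin))).mul continuous_const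
    have c2 : Continuous fun δ : ℝ => Real.sin (π - 2 * arcsin δ) * B :=
      (Real.continuous_sin.comp (continuous_const.sub
        (continuous_const.mul Real.continuous_arcsin))).mul continuous_const
    rw [this, intervalIntegral.integral_add (c1.intervalIntegrable _ _)
        (c2.intervalIntegrable _ _),
      intervalIntegral.integral_mul_const, intervalIntegral.integral_mul_const]
    rw [show (∫ δ in (-1:ℝ)..1, Real.cos (π - 2 * arcsin δ)) = -(2/3) from int_cos_shift,
      show (∫ δ in (-1:ℝ)..1, Real.sin (π - 2 * arcsin δ)) = 0 from int_sin_shift]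
    ring
  constructor
  · calc (∫ θ, f θ * KopR g θ ∂(volume : Measure S1))
        = ∫ θ, (1/2) * ∫ δ, G (δ, θ) ∂nu ∂(volume : Measure S1) := by
          congr 1; funext θ; exact id1 θ
      _ = (1/2) * ∫ θ, (∫ δ, G (δ, θ) ∂nu) ∂(volume : Measure S1) := integral_const_mul _ _
      _ = (1/2) * ∫ δ, (∫ θ, G (δ, θ) ∂(volume : Measure S1)) ∂nu := by
          rw [← integral_integral_swap (f := fun δ θ => G (δ, θ)) hG]
      _ = -(1/3) * A := by rw [houter]; ring
  · have : (fun θ => f θ * KopR g θ) = fun θ => (1/2) * ∫ δ, G (δ, θ) ∂nu :=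
      funext fun θ => id1 θ
    rw [this]
    exact (hG.integral_prod_right).const_mul _


lemma solve {lam : ℝ} (hlam : lam ≠ 0) {g h : S1 → ℝ}
    (hg : Integrable g (volume : Measure S1))
    (hsol : ∀ᵐ θ ∂(volume : Measure S1), 2 * lam * (KopR g θ - g θ) = h θ)
    {f f' : S1 → ℝ} (hfc : Continuous f) (hf'c : Continuous f')
    (hfb : ∀ θ, |f θ| ≤ 1) (hf'b : ∀ θ, |f' θ| ≤ 1)
    (hrot : ∀ (θ : S1) (x : ℝ), f (θ + (x : S1)) = f θ * Real.cos x - f' θ * Real.sin x) :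
    (∫ θ, f θ * g θ ∂(volume : Measure S1))
      = -(3/(8*lam)) * ∫ θ, f θ * h θ ∂(volume : Measure S1) := by
  obtain ⟨hpair, hint⟩ := pairing hg hfc hf'c hfb hf'b hrot
  have hA : Integrable (fun θ => f θ * g θ) (volume : Measure S1) :=
    hg.bdd_mul hfc.aestronglyMeasurable (c := 1) (Filter.Eventually.of_forall fun θ => by simpa [Real.norm_eq_abs] using hfb θ)
  have e : (∫ θ, f θ * h θ ∂(volume : Measure S1))
      = ∫ θ, (2*lam * (f θ * KopR g θ) - 2*lam*(f θ * g θ)) ∂(volume : Measure S1) := by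
    refine integral_congr_ae ?_
    filter_upwards [hsol] with θ hθ
    rw [← hθ]; ring
  rw [e, integral_sub (hint.const_mul _) (hA.const_mul _), integral_const_mul,
    integral_const_mul, hpair]
  field_simp
  ring

lemma int_ccos_sq : (∫ θ, ccos θ * ccos θ ∂(volume : Measure S1)) = π := by
  rw [← AddCircle.intervalIntegral_preimage (2*π) 0 (fun θ => ccos θ * ccos θ)]
  simp only [ccos_coe, zero_add]
  have : (∫ x in (0:ℝ)..(2*π), Real.cos x * Real.cos x)
      = ∫ x in (0:ℝ)..(2*π), Real.cos x ^ 2 := by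
    congr 1; funext x; ring
  rw [this, integral_cos_sq]
  simp [Real.sin_two_pi, Real.cos_two_pi]

lemma int_csin_sq : (∫ θ, csin θ * csin θ ∂(volume : Measure S1)) = π := by
  rw [← AddCircle.intervalIntegral_preimage (2*π) 0 (fun θ => csin θ * csin θ)]
  simp only [csin_coe, zero_add]
  have : (∫ x in (0:ℝ)..(2*π), Real.sin x * Real.sin x)
      = ∫ x in (0:ℝ)..(2*π), Real.sin x ^ 2 := by
    congr 1; funext x; ring
  rw [this, integral_sin_sq]
  simp [Real.sin_two_pi, Real.cos_two_pi]

lemma int_ccos_csin : (∫ θ, ccos θ * csin θ ∂(volume : Measure S1)) = 0 := by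
  rw [← AddCircle.intervalIntegral_preimage (2*π) 0 (fun θ => ccos θ * csin θ)]
  simp only [ccos_coe, csin_coe, zero_add]
  have : (∫ x in (0:ℝ)..(2*π), Real.cos x * Real.sin x)
      = ∫ x in (0:ℝ)..(2*π), Real.sin x * Real.cos x := by
    congr 1; funext x; ring
  rw [this, integral_sin_mul_cos₁]
  simp [Real.sin_two_pi]

lemma int_csin_ccos : (∫ θ, csin θ * ccos θ ∂(volume : Measure S1)) = 0 := by
  have : (fun θ : S1 => csin θ * ccos θ) = fun θ => ccos θ * csin θ := by
    funext θ; ring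
  rw [this, int_ccos_csin]

/-- let `g₁, g₂` be the mean-zero `L²`-solutions of `L g_j = v_j`
(`L = 2λ(K − I)`, `v_j` the `j`-th Cartesian component of `v ∈ S¹`), and set
`D_{ij} = (1/(2π)) ∫ v_i (−g_j(v)) dv`. Then `D_{12} = D_{21} = 0`,
`D_{11} = D_{22} = 3/(16λ)`, and in particular the diffusion coefficient
`D = (1/(4π)) ∫ v · (−L)⁻¹ v dv` is strictly positive. -/
theorem diffusion_matrix
    (lam : ℝ) (hlam : 0 < lam) (g1 g2 : S1 → ℝ)
    (hg1 : MemLp g1 2 (volume : Measure S1))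
    (hg1zero : (∫ θ, g1 θ ∂(volume : Measure S1)) = 0)
    (hg1sol : ∀ᵐ θ ∂(volume : Measure S1), 2 * lam * (KopR g1 θ - g1 θ) = ccos θ)
    (hg2 : MemLp g2 2 (volume : Measure S1))
    (hg2zero : (∫ θ, g2 θ ∂(volume : Measure S1)) = 0)
    (hg2sol : ∀ᵐ θ ∂(volume : Measure S1), 2 * lam * (KopR g2 θ - g2 θ) = csin θ) :
    ((1 / (2 * π)) * ∫ θ, ccos θ * (-(g2 θ)) ∂(volume : Measure S1)) = 0 ∧
    ((1 / (2 * π)) * ∫ θ, csin θ * (-(g1 θ)) ∂(volume : Measure S1)) = 0 ∧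
    ((1 / (2 * π)) * ∫ θ, ccos θ * (-(g1 θ)) ∂(volume : Measure S1)) = 3 / (16 * lam) ∧
    ((1 / (2 * π)) * ∫ θ, csin θ * (-(g2 θ)) ∂(volume : Measure S1)) = 3 / (16 * lam) ∧
    0 < (1 / (4 * π)) *
        ∫ θ, (ccos θ * (-(g1 θ)) + csin θ * (-(g2 θ))) ∂(volume : Measure S1) := by
  have hlam0 : lam ≠ 0 := ne_of_gt hlam
  have hπ : (π : ℝ) ≠ 0 := Real.pi_ne_zero
  have hg1int : Integrable g1 (volume : Measure S1) := hg1.integrable (by norm_num)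
  have hg2int : Integrable g2 (volume : Measure S1) := hg2.integrable (by norm_num)
  have hrot1 : ∀ (θ : S1) (x : ℝ), ccos (θ + (x : S1))
      = ccos θ * Real.cos x - csin θ * Real.sin x := ccos_add
  have hrot2 : ∀ (θ : S1) (x : ℝ), csin (θ + (x : S1))
      = csin θ * Real.cos x - (fun θ => -ccos θ) θ * Real.sin x := by
    intro θ x; rw [csin_add]; ring
  have hnb : ∀ θ : S1, |(fun θ : S1 => -ccos θ) θ| ≤ 1 := fun θ => by
    simpa [abs_neg] using abs_ccos_le θ
  have I1 : (∫ θ, ccos θ * g1 θ ∂(volume : Measure S1)) = -(3/(8*lam)) * π := by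
    rw [solve hlam0 hg1int hg1sol continuous_ccos continuous_csin abs_ccos_le abs_csin_le hrot1,
      int_ccos_sq]
  have I2 : (∫ θ, ccos θ * g2 θ ∂(volume : Measure S1)) = 0 := by
    rw [solve hlam0 hg2int hg2sol continuous_ccos continuous_csin abs_ccos_le abs_csin_le hrot1,
      int_ccos_csin]
    ring
  have I3 : (∫ θ, csin θ * g1 θ ∂(volume : Measure S1)) = 0 := by
    rw [solve hlam0 hg1int hg1sol continuous_csin continuous_ccos.neg abs_csin_le hnb hrot2,
      int_csin_ccos]
    ring
  have I4 : (∫ θ, csin θ * g2 θ ∂(volume : Measure S1)) = -(3/(8*lam)) * π := by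
    rw [solve hlam0 hg2int hg2sol continuous_csin continuous_ccos.neg abs_csin_le hnb hrot2,
      int_csin_sq]
  have E1 : (∫ θ, ccos θ * (-(g2 θ)) ∂(volume : Measure S1)) = 0 := by
    simp only [mul_neg]
    rw [integral_neg, I2, neg_zero]
  have E2 : (∫ θ, csin θ * (-(g1 θ)) ∂(volume : Measure S1)) = 0 := by
    simp only [mul_neg]
    rw [integral_neg, I3, neg_zero]
  have E3 : (∫ θ, ccos θ * (-(g1 θ)) ∂(volume : Measure S1)) = 3/(8*lam) * π := by
    simp only [mul_neg]
    rw [integral_neg, I1]; ring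
  have E4 : (∫ θ, csin θ * (-(g2 θ)) ∂(volume : Measure S1)) = 3/(8*lam) * π := by
    simp only [mul_neg]
    rw [integral_neg, I4]; ring
  have hint1 : Integrable (fun θ => ccos θ * (-(g1 θ))) (volume : Measure S1) :=
    hg1int.neg.bdd_mul continuous_ccos.aestronglyMeasurable
      (c := 1) (Filter.Eventually.of_forall fun θ => by simpa [Real.norm_eq_abs] using abs_ccos_le θ)
  have hint2 : Integrable (fun θ => csin θ * (-(g2 θ))) (volume : Measure S1) :=
    hg2int.neg.bdd_mul continuous_csin.aestronglyMeasurable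
      (c := 1) (Filter.Eventually.of_forall fun θ => by simpa [Real.norm_eq_abs] using abs_csin_le θ)
  have E5 : (∫ θ, (ccos θ * (-(g1 θ)) + csin θ * (-(g2 θ))) ∂(volume : Measure S1))
      = 3/(8*lam) * π + 3/(8*lam) * π := by
    rw [integral_add hint1 hint2, E3, E4]
  refine ⟨?_, ?_, ?_, ?_, ?_⟩
  · rw [E1]; ring
  · rw [E2]; ring
  · rw [E3]; field_simp; ring
  · rw [E4]; field_simp; ring
  · rw [E5]
    have : (1 / (4 * π)) * (3/(8*lam) * π + 3/(8*lam) * π) = 3 / (16 * lam) := by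
      field_simp; ring
    rw [this]
    positivity
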